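/- Let W₁, W₂ be independent exponential random variables with rate 1, and let U be uniform on [0,1], independent of (W₁,W₂). Then (1-U)(W₁+W₂) is exponentially distributed with rate 1. -/

import Mathlib

open MeasureTheory ProbabilityTheory Real

open Set Filter Topology


noncomputable def expPDF : ℝ → ENNReal := fun x => ENNReal.ofReal (if 0 ≤ x then Real.exp (-x) else 0)

lemma expPDF_measurable : Measurable expPDF := by
  apply ENNReal.measurable_ofReal.comp
  exact Measurable.ite measurableSet_Ici (by fun_prop) measurable_const

noncomputable def expM : Measure ℝ := MeasureTheory.volume.withDensity expPDF

lemma expM_Ioi {t : ℝ} (ht : 0 ≤ t) : expM (Set.Ioi t) = ENNReal.ofReal (Real.exp (-t)) := by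
  rw [expM, withDensity_apply _ measurableSet_Ioi]
  have h1 : ∀ x ∈ Set.Ioi t, expPDF x = ENNReal.ofReal (Real.exp (-x)) := by
    intro x hx
    simp only [expPDF, if_pos (le_of_lt (lt_of_le_of_lt ht hx))]
  rw [setLIntegral_congr_fun measurableSet_Ioi h1]
  rw [← ofReal_integral_eq_lintegral_ofReal (by have := exp_neg_integrableOn_Ioi t zero_lt_one; simp at this; exact this) (ae_of_all _ fun x => (Real.exp_pos _).le)]
  rw [integral_exp_neg_Ioi]

lemma expM_Iic_neg {a : ℝ} (ha : a < 0) : expM (Set.Iic a) = 0 := by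
  rw [expM, withDensity_apply _ measurableSet_Iic]
  have h1 : ∀ x ∈ Set.Iic a, expPDF x = 0 := by
    intro x hx
    simp only [expPDF, if_neg (not_le.mpr (lt_of_le_of_lt hx ha)), ENNReal.ofReal_zero]
  rw [setLIntegral_congr_fun measurableSet_Iic h1]
  simp

lemma expM_Iic_zero : expM (Set.Iic 0) = 0 := by
  have : Set.Iic (0:ℝ) = Set.Iio 0 ∪ {0} := by
    ext x; simp [le_iff_lt_or_eq]
  rw [this]
  refine measure_union_null ?_ ?_
  · rw [expM, withDensity_apply _ measurableSet_Iio]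
    have h1 : ∀ x ∈ Set.Iio (0:ℝ), expPDF x = 0 := by
      intro x hx
      simp only [expPDF, if_neg (not_le.mpr (Set.mem_Iio.mp hx)), ENNReal.ofReal_zero]
    rw [setLIntegral_congr_fun measurableSet_Iio h1]
    simp
  · exact (withDensity_absolutelyContinuous _ _) (volume_singleton)

instance expM_prob : IsProbabilityMeasure expM := by
  constructor
  have : (Set.univ : Set ℝ) = Set.Iic 0 ∪ Set.Ioi 0 := (Set.Iic_union_Ioi).symm
  rw [this, measure_union (Set.Iic_disjoint_Ioi le_rfl) measurableSet_Ioi,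
    expM_Iic_zero, expM_Ioi le_rfl]
  simp

lemma expM_Iic {a : ℝ} (ha : 0 ≤ a) : expM (Set.Iic a) = 1 - ENNReal.ofReal (Real.exp (-a)) := by
  have h : Set.Iic a = (Set.Ioi a)ᶜ := by simp
  rw [h, measure_compl measurableSet_Ioi (measure_ne_top _ _), expM_Ioi ha, measure_univ]

lemma expM_Ioi_neg {t : ℝ} (ht : t < 0) : expM (Set.Ioi t) = 1 := by
  have h : Set.Ioi t = (Set.Iic t)ᶜ := by simp
  rw [h, measure_compl measurableSet_Iic (measure_ne_top _ _), expM_Iic_neg ht, measure_univ]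
  simp

lemma expM_prod_tail {s : ℝ} (hs : 0 ≤ s) :
    (expM.prod expM) {p : ℝ × ℝ | s < p.1 + p.2} = ENNReal.ofReal ((1 + s) * Real.exp (-s)) := by
  have hmeas : MeasurableSet {p : ℝ × ℝ | s < p.1 + p.2} :=
    measurableSet_lt measurable_const (measurable_fst.add measurable_snd)
  rw [Measure.prod_apply hmeas]
  have hslice : ∀ x : ℝ, expM (Prod.mk x ⁻¹' {p : ℝ × ℝ | s < p.1 + p.2})
      = if x ≤ s then ENNReal.ofReal (Real.exp (-(s - x))) else 1 := by
    intro x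
    have h : (Prod.mk x ⁻¹' {p : ℝ × ℝ | s < p.1 + p.2}) = Set.Ioi (s - x) := by
      ext y; simp [Set.mem_Ioi, sub_lt_iff_lt_add']
    rw [h]
    split_ifs with h1
    · exact expM_Ioi (by linarith)
    · exact expM_Ioi_neg (by linarith)
  simp_rw [hslice]
  rw [expM, lintegral_withDensity_eq_lintegral_mul _ expPDF_measurable
    (Measurable.ite (measurableSet_Iic) (by fun_prop) measurable_const)]
  set h : ℝ → ℝ := fun x =>
    Set.indicator (Set.Icc 0 s) (fun _ => Real.exp (-s)) x
    + Set.indicator (Set.Ioi s) (fun x => Real.exp (-x)) x with hh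
  have key : ∀ x : ℝ, (expPDF * fun x => if x ≤ s then ENNReal.ofReal (Real.exp (-(s - x))) else 1) x
      = ENNReal.ofReal (h x) := by
    intro x
    simp only [Pi.mul_apply, expPDF, hh]
    rcases lt_or_ge x 0 with hx | hx
    · rw [if_neg (not_le.mpr hx), Set.indicator_of_notMem (by simp [Set.mem_Icc]; intro h'; linarith),
        Set.indicator_of_notMem (by simp [Set.mem_Ioi]; linarith)]
      simp
    · rw [if_pos hx]
      rcases le_or_gt x s with hxs | hxs
      · rw [if_pos hxs, Set.indicator_of_mem (Set.mem_Icc.mpr ⟨hx, hxs⟩),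
          Set.indicator_of_notMem (by simp [Set.mem_Ioi]; exact hxs)]
        rw [← ENNReal.ofReal_mul (Real.exp_pos _).le, ← Real.exp_add]
        ring_nf
      · rw [if_neg (not_le.mpr hxs), Set.indicator_of_notMem (by simp [Set.mem_Icc]; intro h'; linarith),
          Set.indicator_of_mem (Set.mem_Ioi.mpr hxs)]
        simp
  rw [lintegral_congr key]
  have hint1 : Integrable (Set.indicator (Set.Icc 0 s) (fun _ => Real.exp (-s))) := by
    rw [integrable_indicator_iff measurableSet_Icc]
    exact integrableOn_const measure_Icc_lt_top.ne
  have hint2 : Integrable (Set.indicator (Set.Ioi s) (fun x => Real.exp (-x))) := by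
    rw [integrable_indicator_iff measurableSet_Ioi]
    simpa using exp_neg_integrableOn_Ioi s zero_lt_one
  have hint : Integrable h := hint1.add hint2
  have hnn : 0 ≤ᵐ[volume] h := by
    refine ae_of_all _ fun x => ?_
    refine add_nonneg (Set.indicator_nonneg (fun _ _ => (Real.exp_pos _).le) x)
      (Set.indicator_nonneg (fun _ _ => (Real.exp_pos _).le) x)
  rw [← ofReal_integral_eq_lintegral_ofReal hint hnn]
  congr 1
  rw [integral_add hint1 hint2, integral_indicator measurableSet_Icc, integral_indicator measurableSet_Ioi,
    setIntegral_const, integral_exp_neg_Ioi]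
  rw [Real.volume_real_Icc_of_le hs, smul_eq_mul]
  ring_nf

lemma phi_measurable (t : ℝ) : Measurable (fun u : ℝ => (1 + t / (1 - u)) * Real.exp (-(t / (1 - u)))) := by
  fun_prop

lemma phi_bound {t u : ℝ} (ht : 0 ≤ t) (hu : u ≤ 1) :
    ‖(1 + t / (1 - u)) * Real.exp (-(t / (1 - u)))‖ ≤ 1 := by
  have hr : 0 ≤ t / (1 - u) := by
    rcases eq_or_lt_of_le hu with h | h
    · simp [← h]
    · exact div_nonneg ht (by linarith)
  set r := t / (1 - u)
  rw [Real.norm_eq_abs, abs_of_nonneg (mul_nonneg (by linarith) (Real.exp_pos _).le)]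
  have h1 : Real.exp r * Real.exp (-r) = 1 := by rw [← Real.exp_add]; simp
  nlinarith [Real.add_one_le_exp r, (Real.exp_pos (-r)).le, h1]

lemma unif_mix_integral {t : ℝ} (ht : 0 < t) :
    ∫ u in (0:ℝ)..1, (1 + t / (1 - u)) * Real.exp (-(t / (1 - u))) = Real.exp (-t) := by
  set φ : ℝ → ℝ := fun u => (1 + t / (1 - u)) * Real.exp (-(t / (1 - u))) with hφ
  set F : ℝ → ℝ := fun u => -((1 - u) * Real.exp (-(t / (1 - u)))) with hF
  have hder : ∀ u : ℝ, u ≠ 1 → HasDerivAt F (φ u) u := by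
    intro u hu
    have h1 : (1:ℝ) - u ≠ 0 := sub_ne_zero.mpr (Ne.symm hu)
    have hv : HasDerivAt (fun u : ℝ => 1 - u) (-1) u := (hasDerivAt_id u).const_sub 1
    have hinv : HasDerivAt (fun u : ℝ => (1 - u)⁻¹) (-(-1) / (1 - u) ^ 2) u := hv.inv h1
    have hmul : HasDerivAt (fun u : ℝ => t * (1 - u)⁻¹) (t * (-(-1) / (1 - u) ^ 2)) u :=
      hinv.const_mul t
    have hexp : HasDerivAt (fun u : ℝ => Real.exp (-(t * (1 - u)⁻¹)))
        (Real.exp (-(t * (1 - u)⁻¹)) * (-(t * (-(-1) / (1 - u) ^ 2)))) u := hmul.neg.exp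
    have hprod : HasDerivAt (fun u : ℝ => -((1 - u) * Real.exp (-(t * (1 - u)⁻¹))))
        (-(-1 * Real.exp (-(t * (1 - u)⁻¹)) + (1 - u) * (Real.exp (-(t * (1 - u)⁻¹)) * -(t * (- -1 / (1 - u) ^ 2))))) u :=
      (hv.mul hexp).neg
    have hFeq : F = fun u : ℝ => -((fun u : ℝ => 1 - u) u * (fun u : ℝ => Real.exp (-(t * (1 - u)⁻¹))) u) := by
      funext x
      simp only [hF, div_eq_mul_inv]
    rw [hFeq]
    convert hprod using 1
    simp only [hφ, div_eq_mul_inv]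
    field_simp
    ring
  have hcont : ContinuousOn F (Set.Icc 0 1) := by
    intro u hu
    rcases eq_or_lt_of_le hu.2 with h | h
    · have hF1 : F 1 = 0 := by simp [hF]
      rw [h]
      unfold ContinuousWithinAt
      rw [hF1]
      have hg : Tendsto (fun u : ℝ => 1 - u) (nhdsWithin 1 (Set.Icc 0 1)) (nhds 0) := by
        have h2 : Tendsto (fun u : ℝ => 1 - u) (nhdsWithin 1 (Set.Icc 0 1)) (nhds (1 - 1)) :=
          ((continuous_const.sub continuous_id).tendsto 1).mono_left nhdsWithin_le_nhds
        simpa using h2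
      refine squeeze_zero_norm' ?_ hg
      filter_upwards [self_mem_nhdsWithin] with x hx
      have hx1 : x ≤ 1 := hx.2
      have hr : 0 ≤ t / (1 - x) := by
        rcases eq_or_lt_of_le hx1 with h' | h'
        · simp [← h']
        · exact div_nonneg ht.le (by linarith)
      simp only [hF, Real.norm_eq_abs, abs_neg]
      rw [abs_of_nonneg (mul_nonneg (by linarith) (Real.exp_pos _).le)]
      calc (1 - x) * Real.exp (-(t / (1 - x))) ≤ (1 - x) * 1 := by
            apply mul_le_mul_of_nonneg_left _ (by linarith)
            rw [Real.exp_le_one_iff]; linarith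
        _ = 1 - x := mul_one _
    · exact ((hder u (ne_of_lt h)).continuousAt).continuousWithinAt
  have hint : IntervalIntegrable φ volume 0 1 := by
    rw [intervalIntegrable_iff_integrableOn_Ioc_of_le zero_le_one]
    apply Integrable.mono' (integrable_const 1) ((phi_measurable t).aestronglyMeasurable.restrict)
    filter_upwards [ae_restrict_mem measurableSet_Ioc] with x hx
    exact phi_bound ht.le hx.2
  have hftc := intervalIntegral.integral_eq_sub_of_hasDeriv_right_of_le zero_le_one hcont
    (fun x hx => (hder x (ne_of_lt hx.2)).hasDerivWithinAt) hint
  rw [hftc]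
  simp [hF]

lemma map_eq_expM {Ω : Type*} [MeasurableSpace Ω] (μ : Measure Ω) [IsProbabilityMeasure μ]
    (W : Ω → ℝ) (hW : Measurable W)
    (hlaw : ∀ t : ℝ, 0 ≤ t → μ {ω | t < W ω} = ENNReal.ofReal (Real.exp (-t))) :
    μ.map W = expM := by
  have : IsProbabilityMeasure (μ.map W) := Measure.isProbabilityMeasure_map hW.aemeasurable
  refine Measure.ext_of_Iic (μ.map W) expM fun a => ?_
  rw [Measure.map_apply hW measurableSet_Iic]
  rcases lt_or_ge a 0 with ha | ha
  · rw [expM_Iic_neg ha]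
    have h0 : μ {ω | 0 < W ω} = 1 := by simpa using hlaw 0 le_rfl
    have hsub : W ⁻¹' Set.Iic a ⊆ {ω | 0 < W ω}ᶜ := fun ω hω => by
      simp only [Set.mem_compl_iff, Set.mem_setOf_eq, not_lt]
      exact le_trans hω ha.le
    refine measure_mono_null hsub ?_
    have hms : MeasurableSet {ω | 0 < W ω} := hW measurableSet_Ioi
    rw [measure_compl hms (measure_ne_top _ _), h0, measure_univ, tsub_self]
  · rw [expM_Iic ha]
    have hset : W ⁻¹' Set.Iic a = {ω | a < W ω}ᶜ := by ext ω; simp [not_lt]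
    have hms : MeasurableSet {ω | a < W ω} := hW measurableSet_Ioi
    rw [hset, measure_compl hms (measure_ne_top _ _), hlaw a ha, measure_univ]

/-- If W₁, W₂ are independent Exp(1) random variables and U is uniform on [0,1],
with (W₁, W₂, U) independent, then (1-U)(W₁+W₂) is Exp(1). -/
theorem one_sub_unif_mul_sum_exp_is_exponential
    {Ω : Type*} [MeasurableSpace Ω] (μ : Measure Ω) [IsProbabilityMeasure μ]
    (W₁ W₂ U : Ω → ℝ) (hW₁ : Measurable W₁) (hW₂ : Measurable W₂) (hU : Measurable U)
    (hlawW₁ : ∀ t : ℝ, 0 ≤ t → μ {ω | t < W₁ ω} = ENNReal.ofReal (Real.exp (-t)))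
    (hlawW₂ : ∀ t : ℝ, 0 ≤ t → μ {ω | t < W₂ ω} = ENNReal.ofReal (Real.exp (-t)))
    (hlawU : Measure.map U μ = volume.restrict (Set.Icc (0:ℝ) 1))
    (hindep : iIndepFun ![W₁, W₂, U] μ) :
    ∀ t : ℝ, 0 ≤ t →
      μ {ω | t < (1 - U ω) * (W₁ ω + W₂ ω)} = ENNReal.ofReal (Real.exp (-t)) := by
  intro t ht
  have hmap1 : μ.map W₁ = expM := map_eq_expM μ W₁ hW₁ hlawW₁
  have hmap2 : μ.map W₂ = expM := map_eq_expM μ W₂ hW₂ hlawW₂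
  have hm : ∀ i, Measurable (![W₁, W₂, U] i) := by
    intro i; fin_cases i <;> simpa
  have hindep12 : IndepFun W₁ W₂ μ := by
    have := hindep.indepFun (show (0:Fin 3) ≠ 1 by decide)
    simpa using this
  have hmap12 : μ.map (fun ω => (W₁ ω, W₂ ω)) = expM.prod expM := by
    rw [(indepFun_iff_map_prod_eq_prod_map_map hW₁.aemeasurable hW₂.aemeasurable).mp hindep12,
      hmap1, hmap2]
  set S : Ω → ℝ := fun ω => W₁ ω + W₂ ω with hS
  have hSm : Measurable S := hW₁.add hW₂
  have hmapS : μ.map S = (expM.prod expM).map (fun p : ℝ × ℝ => p.1 + p.2) := by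
    rw [← hmap12, Measure.map_map measurable_add (hW₁.prodMk hW₂)]
    rfl
  have htailS : ∀ s : ℝ, 0 ≤ s → (μ.map S) (Set.Ioi s) = ENNReal.ofReal ((1 + s) * Real.exp (-s)) := by
    intro s hs
    rw [hmapS, Measure.map_apply measurable_add measurableSet_Ioi]
    have : (fun p : ℝ × ℝ => p.1 + p.2) ⁻¹' Set.Ioi s = {p : ℝ × ℝ | s < p.1 + p.2} := rfl
    rw [this, expM_prod_tail hs]
  have hUS : IndepFun U S μ := by
    have h3 := hindep.indepFun_prodMk hm 0 1 2 (by decide) (by decide)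
    have h4 : IndepFun (fun ω => (W₁ ω, W₂ ω)) U μ := by simpa using h3
    have h5 := h4.comp measurable_add measurable_id
    exact h5.symm
  have hprobS : IsProbabilityMeasure (μ.map S) := Measure.isProbabilityMeasure_map hSm.aemeasurable
  have hmapUS : μ.map (fun ω => (U ω, S ω)) = (volume.restrict (Set.Icc (0:ℝ) 1)).prod (μ.map S) := by
    rw [(indepFun_iff_map_prod_eq_prod_map_map hU.aemeasurable hSm.aemeasurable).mp hUS, hlawU]
  have hA : MeasurableSet {p : ℝ × ℝ | t < (1 - p.1) * p.2} :=
    measurableSet_lt measurable_const ((measurable_const.sub measurable_fst).mul measurable_snd)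
  have hev : μ {ω | t < (1 - U ω) * (W₁ ω + W₂ ω)}
      = μ.map (fun ω => (U ω, S ω)) {p : ℝ × ℝ | t < (1 - p.1) * p.2} := by
    rw [Measure.map_apply (hU.prodMk hSm) hA]
    rfl
  rw [hev, hmapUS, Measure.prod_apply hA]
  have hslice : ∀ u : ℝ, (Prod.mk u ⁻¹' {p : ℝ × ℝ | t < (1 - p.1) * p.2}) = {s : ℝ | t < (1 - u) * s} :=
    fun u => rfl
  simp_rw [hslice]
  rw [← MeasureTheory.Measure.restrict_congr_set MeasureTheory.Ico_ae_eq_Icc]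
  set φ : ℝ → ℝ := fun u => (1 + t / (1 - u)) * Real.exp (-(t / (1 - u))) with hφ
  have hcongr : ∀ u ∈ Set.Ico (0:ℝ) 1, (μ.map S) {s : ℝ | t < (1 - u) * s} = ENNReal.ofReal (φ u) := by
    intro u hu
    have h1 : (0:ℝ) < 1 - u := by have := hu.2; linarith
    have hset : {s : ℝ | t < (1 - u) * s} = Set.Ioi (t / (1 - u)) := by
      ext s
      simp only [Set.mem_setOf_eq, Set.mem_Ioi]
      rw [div_lt_iff₀ h1, mul_comm]
    rw [hset, htailS _ (div_nonneg ht h1.le)]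
  rw [setLIntegral_congr_fun measurableSet_Ico hcongr]
  have hφm := phi_measurable t
  have hintφ : Integrable φ (volume.restrict (Set.Ico (0:ℝ) 1)) := by
    apply Integrable.mono' (integrable_const 1) (hφm.aestronglyMeasurable.restrict)
    filter_upwards [ae_restrict_mem measurableSet_Ico] with x hx
    exact phi_bound ht hx.2.le
  have hnnφ : 0 ≤ᵐ[volume.restrict (Set.Ico (0:ℝ) 1)] φ := by
    filter_upwards [ae_restrict_mem measurableSet_Ico] with x hx
    have h1 : (0:ℝ) < 1 - x := by have := hx.2; linarith
    have hr : 0 ≤ t / (1 - x) := div_nonneg ht h1.le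
    exact mul_nonneg (by linarith) (Real.exp_pos _).le
  rw [← ofReal_integral_eq_lintegral_ofReal hintφ hnnφ]
  congr 1
  rcases eq_or_lt_of_le ht with ht0 | ht0
  · have hφ1 : φ = fun _ => (1:ℝ) := by
      funext u; simp [hφ, ← ht0]
    rw [hφ1]
    simp [← ht0, Real.volume_Ico]
  · rw [MeasureTheory.integral_Ico_eq_integral_Ioo, ← MeasureTheory.integral_Ioc_eq_integral_Ioo,
      ← intervalIntegral.integral_of_le zero_le_one]
    exact unif_mix_integral ht0
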